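/- Let x₀, x₁, …, xₙ (n ≥ 1) be points on the circle such that (xₙ, xₙ₋₁, …, x₁, x₀) is positively oriented, and let μ be a Radon measure on pairs of distinct circle points. Assume each consecutive pair (xᵢ, xᵢ₊₁) is μ-somewhat short and assume μ({xᵢ} × [xᵢ₋₁, xᵢ₊₁]) = 0 for each interior index 0 < i < n (with arcs labeled by the orientation). Then (x₀, xₙ) is μ-somewhat short. -/

import Mathlib

open MeasureTheory Set ENNReal

/-- The open arc `]a,b[` on a circularly ordered set. -/
def oarc {S : Type*} [CircularOrder S] (a b : S) : Set S := {x | sbtw a x b}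

/-- The closed arc `[a,b]`. -/
def carc {S : Type*} [CircularOrder S] (a b : S) : Set S :=
  insert a (insert b (oarc a b))

/-- `(a,b)` is `μ`-somewhat short. -/
def SomewhatShort {S : Type*} [CircularOrder S] [MeasurableSpace S]
    (μ : Measure (S × S)) (a b : S) : Prop :=
  μ ((oarc a b) ×ˢ (oarc b a)) = 0

lemma sbtw_total3 {S : Type*} [CircularOrder S] {a b c : S}
    (h1 : a ≠ b) (h2 : b ≠ c) (h3 : c ≠ a) : sbtw a b c ∨ sbtw c b a := by
  rcases btw_total a b c with h | h
  · exact Or.inl (h.sbtw_of_not_btw fun h' =>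
      (btw_antisymm h h').elim h1 (fun h'' => h''.elim h2 h3))
  · exact Or.inr (h.sbtw_of_not_btw fun h' =>
      (btw_antisymm h h').elim (fun e => h2 e.symm)
        (fun h'' => h''.elim (fun e => h1 e.symm) (fun e => h3 e.symm)))

lemma sbtw_ne12 {S : Type*} [CircularOrder S] {a b c : S} (h : sbtw a b c) : a ≠ b := by
  rintro rfl; exact sbtw_irrefl_left h

lemma sbtw_ne23 {S : Type*} [CircularOrder S] {a b c : S} (h : sbtw a b c) : b ≠ c := by
  rintro rfl; exact sbtw_irrefl_right h

/-- Trichotomy on an open arc: if `y` and `m` both lie strictly between `a` and `c`,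
then `y` is before `m`, equal to `m`, or after `m`. -/
lemma arc_trichotomy {S : Type*} [CircularOrder S] {a c y m : S}
    (hy : sbtw a y c) (hm : sbtw a m c) :
    sbtw a y m ∨ y = m ∨ sbtw m y c := by
  by_cases hym : y = m
  · exact Or.inr (Or.inl hym)
  rcases sbtw_total3 (sbtw_ne12 hy) hym (fun e => sbtw_ne12 hm e.symm) with h | h
  · exact Or.inl h
  · refine Or.inr (Or.inr ?_)
    have h1 : sbtw y a m := h.cyclic_left
    have h2 : sbtw y c a := hy.cyclic_left
    exact (h2.trans_right h1).cyclic_left.cyclic_left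

/-- if `(xₙ, …, x₀)` is positively oriented, each consecutive pair
`(xᵢ, xᵢ₊₁)` is `μ`-somewhat short, and each vertex slice `{xᵢ} × [xᵢ₋₁, xᵢ₊₁]` is
`μ`-null, then `(x₀, xₙ)` is `μ`-somewhat short. -/
theorem endpoints_somewhat_short
    {S : Type*} [CircularOrder S] [MeasurableSpace S]
    (μ : Measure (S × S))
    (hflip : ∀ A B : Set S, μ (A ×ˢ B) = μ (B ×ˢ A))
    (n : ℕ) (hn : 1 ≤ n) (x : ℕ → S)
    (hpos : ∀ i j k : ℕ, i < j → j < k → k ≤ n → sbtw (x k) (x j) (x i))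
    (hss : ∀ i < n, SomewhatShort μ (x i) (x (i + 1)))
    (hvert : ∀ i, 0 < i → i < n →
      μ ({x i} ×ˢ carc (x (i - 1)) (x (i + 1))) = 0) :
    SomewhatShort μ (x 0) (x n) := by
  induction n, hn using Nat.le_induction with
  | base => exact hss 0 one_pos
  | succ n hn1 ih =>
    have IH : SomewhatShort μ (x 0) (x n) :=
      ih (fun i j k hij hjk hk => hpos i j k hij hjk (hk.trans n.le_succ))
        (fun i hi => hss i (Nat.lt_succ_of_lt hi))
        (fun i h0 hi => hvert i h0 (Nat.lt_succ_of_lt hi))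
    -- key points
    have h1 : sbtw (x (n + 1)) (x n) (x 0) := hpos 0 n (n + 1) hn1 n.lt_succ_self le_rfl
    -- Set inclusion
    have hsub : (oarc (x (n + 1)) (x 0)) ×ˢ (oarc (x 0) (x (n + 1))) ⊆
        ((oarc (x (n + 1)) (x n)) ×ˢ (oarc (x n) (x (n + 1)))) ∪
        (({x n} : Set S) ×ˢ carc (x (n - 1)) (x (n + 1))) ∪
        ((oarc (x n) (x 0)) ×ˢ (oarc (x 0) (x n))) := by
      rintro ⟨y, z⟩ ⟨hy, hz⟩
      simp only [oarc, mem_setOf_eq] at hy hz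
      rcases arc_trichotomy hy h1 with hc | hc | hc
      · -- y strictly between x(n+1) and x n
        refine Or.inl (Or.inl ⟨hc, ?_⟩)
        exact h1.cyclic_left.trans_left hz
      · -- y = x n
        subst hc
        refine Or.inl (Or.inr ⟨rfl, ?_⟩)
        by_cases h2 : n = 1
        · subst h2
          exact Or.inr (Or.inr hz)
        · have hn2 : 1 ≤ n - 1 := by omega
          have h3 : sbtw (x (n + 1)) (x (n - 1)) (x 0) :=
            hpos 0 (n - 1) (n + 1) hn2 (by omega) le_rfl
          exact Or.inr (Or.inr (h3.cyclic_left.trans_left hz : sbtw (x (n-1)) z (x (n+1))))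
      · -- y strictly between x n and x 0
        refine Or.inr ⟨hc, ?_⟩
        have : sbtw z (x n) (x 0) := (hz.cyclic_left).trans_left h1
        exact this.cyclic_right
    -- Measures of the three pieces
    have hA : μ ((oarc (x (n + 1)) (x n)) ×ˢ (oarc (x n) (x (n + 1)))) = 0 := by
      rw [hflip]; exact hss n n.lt_succ_self
    have hB : μ (({x n} : Set S) ×ˢ carc (x (n - 1)) (x (n + 1))) = 0 :=
      hvert n hn1 n.lt_succ_self
    have hC : μ ((oarc (x n) (x 0)) ×ˢ (oarc (x 0) (x n))) = 0 := by
      rw [hflip]; exact IH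
    have hkey : μ ((oarc (x (n + 1)) (x 0)) ×ˢ (oarc (x 0) (x (n + 1)))) = 0 := by
      refine le_antisymm ?_ zero_le
      calc μ _ ≤ _ := measure_mono hsub
        _ ≤ _ + _ := measure_union_le _ _
        _ ≤ (_ + _) + _ := add_le_add_left (measure_union_le _ _) _
        _ = 0 := by rw [hA, hB, hC]; simp
    unfold SomewhatShort
    rw [hflip]
    exact hkey
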